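/- Let n₁,…,n_r be positive integers with n = n₁ + ⋯ + n_r, and let ω₀ ∈ S_n be the permutation sending i to n+1-i. Let W_P = S_{n₁} × ⋯ × S_{n_r} ⊆ S_n be the Young subgroup stabilizing the partition of {1,…,n} into consecutive blocks of sizes n₁,…,n_r. Then the number of cosets ωW_P ∈ S_n/W_P with ω⁻¹ω₀ω ∈ W_P equals ⌊n/2⌋! / ∏ᵢ ⌊nᵢ/2⌋! if at most one nᵢ is odd, and equals 0 otherwise. -/

import Mathlib

/-- The subgroup of permutations of `α` preserving the fibres of `p : α → β`. -/
def fiberwise {α β : Type*} (p : α → β) : Subgroup (Equiv.Perm α) where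
  carrier := {w | ∀ v, p (w v) = p v}
  one_mem' := fun _ => rfl
  mul_mem' := fun {a b} ha hb v => by
    simpa [Equiv.Perm.mul_apply] using (ha (b v)).trans (hb v)
  inv_mem' := fun {a} ha v => by
    have h := ha (a⁻¹ v)
    rw [show a (a⁻¹ v) = v by simp] at h
    exact h.symm

/-- The index of the consecutive block (of sizes `nvec 0, nvec 1, …`) containing position `v`. -/
def blkOf {r : ℕ} (nvec : Fin r → ℕ) (v : ℕ) : ℕ :=
  (Finset.univ.filter fun j : Fin r => ∑ i ∈ Finset.Iic j, nvec i ≤ v).card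

/-- The Young subgroup `S_{n₁} × ⋯ × S_{n_r} ⊆ S_n`: permutations preserving the partition
of `{0, …, n-1}` into consecutive blocks of sizes `n₁, …, n_r`. -/
def youngSubgroup (n : ℕ) {r : ℕ} (nvec : Fin r → ℕ) : Subgroup (Equiv.Perm (Fin n)) :=
  fiberwise fun v : Fin n => blkOf nvec (v : ℕ)


open Finset Equiv

section BlkStructure

variable {r : ℕ} (nvec : Fin r → ℕ)

theorem blkOf_eq_of (v : ℕ) (j : Fin r)
    (h1 : ∑ i ∈ Finset.Iio j, nvec i ≤ v) (h2 : v < ∑ i ∈ Finset.Iic j, nvec i) :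
    blkOf nvec v = j := by
  have hF : (Finset.univ.filter fun i : Fin r => ∑ k ∈ Finset.Iic i, nvec k ≤ v) =
      Finset.Iio j := by
    ext i
    simp only [mem_filter, mem_univ, true_and, mem_Iio]
    constructor
    · intro hi
      by_contra hij
      push_neg at hij
      exact absurd (le_trans (Finset.sum_le_sum_of_subset (Finset.Iic_subset_Iic.mpr hij)) hi)
        (not_le.mpr h2)
    · intro hij
      refine le_trans (le_trans (Finset.sum_le_sum_of_subset ?_) h1) le_rfl
      intro x hx
      simp only [mem_Iic] at hx
      simp only [mem_Iio]
      exact lt_of_le_of_lt hx hij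
  rw [blkOf, hF, Fin.card_Iio]

theorem exists_blk (v : ℕ) (hv : v < ∑ i, nvec i) :
    ∃ j : Fin r, ∑ i ∈ Finset.Iio j, nvec i ≤ v ∧ v < ∑ i ∈ Finset.Iic j, nvec i := by
  have hr : 0 < r := by
    rcases Nat.eq_zero_or_pos r with h | h
    · subst h; simp at hv
    · exact h
  have hlast : (Fin.last (r - 1) : ℕ) = ((⟨r - 1, by omega⟩ : Fin r) : ℕ) := by
    simp [Fin.last]
  -- the set of j with v < cum j is nonempty
  have hne : (Finset.univ.filter fun j : Fin r => v < ∑ i ∈ Finset.Iic j, nvec i).Nonempty := by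
    refine ⟨⟨r - 1, by omega⟩, ?_⟩
    simp only [mem_filter, mem_univ, true_and]
    have : Finset.Iic (⟨r - 1, by omega⟩ : Fin r) = Finset.univ := by
      ext i
      simp only [mem_Iic, mem_univ, iff_true]
      rw [Fin.le_def]
      have := i.isLt
      simp only []
      omega
    rwa [this]
  set T := Finset.univ.filter fun j : Fin r => v < ∑ i ∈ Finset.Iic j, nvec i with hT
  refine ⟨T.min' hne, ?_, ?_⟩
  · -- pcum (min') ≤ v
    by_contra hlt
    push_neg at hlt
    have hne2 : (Finset.Iio (T.min' hne)).Nonempty := by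
      by_contra he
      rw [Finset.not_nonempty_iff_eq_empty] at he
      rw [he] at hlt
      simp at hlt
    set i := (Finset.Iio (T.min' hne)).max' hne2 with hi
    have hmem : i ∈ Finset.Iio (T.min' hne) := Finset.max'_mem _ _
    have hIicIio : Finset.Iic i = Finset.Iio (T.min' hne) := by
      ext x
      simp only [mem_Iic, mem_Iio]
      constructor
      · intro hx
        exact lt_of_le_of_lt hx (Finset.mem_Iio.mp hmem)
      · intro hx
        exact Finset.le_max' _ _ (Finset.mem_Iio.mpr hx)
    have hiT : i ∈ T := by
      simp only [hT, mem_filter, mem_univ, true_and]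
      rw [hIicIio]
      exact hlt
    exact absurd (Finset.min'_le _ _ hiT) (not_le.mpr (Finset.mem_Iio.mp hmem))
  · have := Finset.min'_mem T hne
    simp only [hT, mem_filter, mem_univ, true_and] at this
    exact this

theorem blkOf_lt (v : ℕ) (hv : v < ∑ i, nvec i) : blkOf nvec v < r := by
  obtain ⟨j, h1, h2⟩ := exists_blk nvec v hv
  rw [blkOf_eq_of nvec v j h1 h2]
  exact j.isLt

theorem sandwich_of_blkOf_eq {n : ℕ} (hn : n = ∑ i, nvec i) (v : Fin n) (j : Fin r)
    (hv : blkOf nvec ↑v = ↑j) :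
    ∑ i ∈ Finset.Iio j, nvec i ≤ ↑v ∧ ↑v < ∑ i ∈ Finset.Iic j, nvec i := by
  obtain ⟨j', h1, h2⟩ := exists_blk nvec ↑v (by rw [← hn]; exact v.2)
  have := blkOf_eq_of nvec ↑v j' h1 h2
  have hjj : j' = j := Fin.ext (by omega)
  subst hjj
  exact ⟨h1, h2⟩

theorem cum_split (j : Fin r) :
    ∑ i ∈ Finset.Iic j, nvec i = ∑ i ∈ Finset.Iio j, nvec i + nvec j := by
  rw [← Finset.Iio_insert, Finset.sum_insert (by simp)]
  omega

theorem blk_fiber_card {n : ℕ} (hn : n = ∑ i, nvec i) (j : Fin r) :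
    (Finset.univ.filter fun v : Fin n => blkOf nvec ↑v = ↑j).card = nvec j := by
  have hsub : ∑ i ∈ Finset.Iic j, nvec i ≤ n := by
    rw [hn]; exact Finset.sum_le_sum_of_subset (Finset.subset_univ _)
  have hcum := cum_split nvec j
  rw [← Fintype.card_fin (nvec j), ← Finset.card_univ]
  refine Finset.card_bij' (fun v hv => ⟨↑v - ∑ i ∈ Finset.Iio j, nvec i, ?_⟩)
    (fun x _ => (⟨∑ i ∈ Finset.Iio j, nvec i + ↑x, ?_⟩ : Fin n)) (fun _ _ => Finset.mem_univ _)
    ?_ ?_ ?_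
  · have := sandwich_of_blkOf_eq nvec hn v j (by simpa using hv)
    omega
  · have := x.2; omega
  · intro x _
    simp only [Finset.mem_filter, Finset.mem_univ, true_and]
    exact blkOf_eq_of nvec _ j (by simp) (by have := x.2; simp; omega)
  · intro v hv
    have := sandwich_of_blkOf_eq nvec hn v j (by simpa using hv)
    exact Fin.ext (by simp; omega)
  · intro x _
    exact Fin.ext (by simp)

end BlkStructure

section Counting
open Nat

variable {α ι : Type*} [Fintype α] [DecidableEq α] [DecidableEq ι]

theorem exists_perm_of_fibcard {f g : α → ι}
    (h : ∀ i, (Finset.univ.filter fun a => f a = i).card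
      = (Finset.univ.filter fun a => g a = i).card) :
    ∃ σ : Equiv.Perm α, f = g ∘ σ := by
  have e : ∀ i, { a // f a = i } ≃ { a // g a = i } := fun i =>
    Fintype.equivOfCardEq (by
      rw [Fintype.card_subtype, Fintype.card_subtype]
      exact h i)
  exact ⟨Equiv.ofFiberEquiv e, funext fun a => (Equiv.ofFiberEquiv_map e a).symm⟩

theorem fibcard_comp_perm (f : α → ι) (σ : Equiv.Perm α) (i : ι) :
    (Finset.univ.filter fun a => f (σ a) = i).card
      = (Finset.univ.filter fun a => f a = i).card := by
  rw [← Fintype.card_subtype, ← Fintype.card_subtype]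
  exact Fintype.card_congr (σ.subtypeEquiv fun a => Iff.rfl)

theorem card_sameFib_mul [Fintype ι] (f : α → ι) :
    (Finset.univ.filter fun g : α → ι =>
        ∀ i, (Finset.univ.filter fun a => g a = i).card
          = (Finset.univ.filter fun a => f a = i).card).card
      * ∏ i, ((Finset.univ.filter fun a => f a = i).card)! = (Fintype.card α)! := by
  classical
  set T := Finset.univ.filter fun g : α → ι =>
      ∀ i, (Finset.univ.filter fun a => g a = i).card
        = (Finset.univ.filter fun a => f a = i).card with hT
  have hmaps : ∀ σ : Equiv.Perm α, σ ∈ (Finset.univ : Finset (Equiv.Perm α)) → f ∘ σ ∈ T := by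
    intro σ _
    simp only [hT, Finset.mem_filter, Finset.mem_univ, true_and]
    intro i
    exact fibcard_comp_perm f σ i
  have key := Finset.card_eq_sum_card_fiberwise hmaps
  have hfib : ∀ g ∈ T, (Finset.univ.filter fun σ : Equiv.Perm α => f ∘ σ = g).card
      = ∏ i, ((Finset.univ.filter fun a => f a = i).card)! := by
    intro g hg
    simp only [hT, Finset.mem_filter, Finset.mem_univ, true_and] at hg
    obtain ⟨σ₀, hσ₀⟩ := exists_perm_of_fibcard hg
    have hcard : (Finset.univ.filter fun σ : Equiv.Perm α => f ∘ σ = g).card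
        = (Finset.univ.filter fun σ : Equiv.Perm α => f ∘ σ = f).card := by
      refine Finset.card_bij' (fun σ _ => σ * σ₀⁻¹) (fun τ _ => τ * σ₀) ?_ ?_ ?_ ?_
      · intro σ hσ
        simp only [Finset.mem_filter, Finset.mem_univ, true_and] at hσ ⊢
        funext x
        have h1 : f (σ (σ₀⁻¹ x)) = g (σ₀⁻¹ x) := congrFun hσ (σ₀⁻¹ x)
        have h2 : g (σ₀⁻¹ x) = f (σ₀ (σ₀⁻¹ x)) := congrFun hσ₀ (σ₀⁻¹ x)
        simp only [Function.comp_apply, Equiv.Perm.mul_apply]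
        rw [h1, h2, Equiv.Perm.coe_inv, Equiv.apply_symm_apply]
      · intro τ hτ
        simp only [Finset.mem_filter, Finset.mem_univ, true_and] at hτ ⊢
        funext x
        have h1 : f (τ (σ₀ x)) = f (σ₀ x) := congrFun hτ (σ₀ x)
        have h2 : f (σ₀ x) = g x := (congrFun hσ₀ x).symm
        simp only [Function.comp_apply, Equiv.Perm.mul_apply]
        rw [h1, h2]
      · intro σ _; group
      · intro τ _; group
    rw [hcard]
    calc (Finset.univ.filter fun σ : Equiv.Perm α => f ∘ σ = f).card
        = Fintype.card {σ : Equiv.Perm α // f ∘ σ = f} := (Fintype.card_subtype _).symm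
      _ = ∏ i, (Fintype.card {a // f a = i})! := DomMulAct.stabilizer_card f
      _ = ∏ i, ((Finset.univ.filter fun a => f a = i).card)! :=
          Finset.prod_congr rfl fun i _ => by rw [Fintype.card_subtype]
  rw [Finset.sum_congr rfl hfib, Finset.sum_const, smul_eq_mul] at key
  rw [← key, Finset.card_univ, Fintype.card_perm]

end Counting

section Halving

variable {ι : Type*} [DecidableEq ι]

theorem fib_split {n hh : ℕ} (f : Fin n → ι) (hf : ∀ v, f (Fin.rev v) = f v)
    (emb : Fin hh → Fin n) (hemb : ∀ u, (emb u).1 = u.1) (c : ι) :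
    (Finset.univ.filter fun v : Fin n => f v = c ∧ v.1 < hh).card
      = (Finset.univ.filter fun u : Fin hh => f (emb u) = c).card := by
  refine Finset.card_bij' (fun v hv => ⟨v.1, ?_⟩) (fun u _ => emb u) ?_ ?_ ?_ ?_
  · simp only [Finset.mem_filter, Finset.mem_univ, true_and] at hv
    exact hv.2
  · intro v hv
    simp only [Finset.mem_filter, Finset.mem_univ, true_and] at hv ⊢
    have : emb ⟨v.1, hv.2⟩ = v := Fin.ext (by rw [hemb])
    rw [this]
    exact hv.1
  · intro u hu
    simp only [Finset.mem_filter, Finset.mem_univ, true_and] at hu ⊢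
    refine ⟨hu, ?_⟩
    rw [hemb]
    exact u.2
  · intro v hv
    simp only [Finset.mem_filter, Finset.mem_univ, true_and] at hv
    exact Fin.ext (by rw [hemb])
  · intro u _
    exact Fin.ext (by simp [hemb])

theorem fib_symm_even {n hh : ℕ} (hn : n = 2 * hh) (f : Fin n → ι)
    (hf : ∀ v, f (Fin.rev v) = f v)
    (emb : Fin hh → Fin n) (hemb : ∀ u, (emb u).1 = u.1) (c : ι) :
    (Finset.univ.filter fun v : Fin n => f v = c).card
      = 2 * (Finset.univ.filter fun u : Fin hh => f (emb u) = c).card := by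
  classical
  have hAB := Finset.card_filter_add_card_filter_not
    (s := Finset.univ.filter fun v : Fin n => f v = c) (p := fun v => v.1 < hh)
  rw [Finset.filter_filter, Finset.filter_filter] at hAB
  have hBA : (Finset.univ.filter fun v : Fin n => f v = c ∧ ¬ v.1 < hh).card
      = (Finset.univ.filter fun v : Fin n => f v = c ∧ v.1 < hh).card := by
    refine Finset.card_bij' (fun v _ => Fin.rev v) (fun v _ => Fin.rev v) ?_ ?_ ?_ ?_
    · intro v hv
      simp only [Finset.mem_filter, Finset.mem_univ, true_and, Fin.val_rev] at hv ⊢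
      refine ⟨hf v ▸ hv.1, ?_⟩
      · have := v.2; omega
    · intro v hv
      simp only [Finset.mem_filter, Finset.mem_univ, true_and, Fin.val_rev] at hv ⊢
      refine ⟨hf v ▸ hv.1, ?_⟩
      · have := v.2; omega
    · intro v _; exact Fin.rev_rev v
    · intro v _; exact Fin.rev_rev v
  have hA := fib_split f hf emb hemb c
  omega

theorem fib_symm_odd {n hh : ℕ} (hn : n = 2 * hh + 1) (f : Fin n → ι)
    (hf : ∀ v, f (Fin.rev v) = f v)
    (emb : Fin hh → Fin n) (hemb : ∀ u, (emb u).1 = u.1)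
    (mid : Fin n) (hm : mid.1 = hh) (c : ι) :
    (Finset.univ.filter fun v : Fin n => f v = c).card
      = 2 * (Finset.univ.filter fun u : Fin hh => f (emb u) = c).card
        + (if f mid = c then 1 else 0) := by
  classical
  have hAB := Finset.card_filter_add_card_filter_not
    (s := Finset.univ.filter fun v : Fin n => f v = c) (p := fun v => v.1 < hh)
  rw [Finset.filter_filter, Finset.filter_filter] at hAB
  have hCD := Finset.card_filter_add_card_filter_not
    (s := Finset.univ.filter fun v : Fin n => f v = c ∧ ¬ v.1 < hh) (p := fun v => v.1 = hh)
  rw [Finset.filter_filter, Finset.filter_filter] at hCD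
  have hmid : (Finset.univ.filter fun v : Fin n => (f v = c ∧ ¬ v.1 < hh) ∧ v.1 = hh).card
      = (if f mid = c then 1 else 0) := by
    split_ifs with hc
    · rw [Finset.card_eq_one]
      refine ⟨mid, ?_⟩
      ext v
      simp only [Finset.mem_filter, Finset.mem_univ, true_and, Finset.mem_singleton]
      constructor
      · intro hv
        exact Fin.ext (by omega)
      · intro hv
        subst hv
        exact ⟨⟨hc, by omega⟩, hm⟩
    · rw [Finset.card_eq_zero]
      ext v
      simp only [Finset.mem_filter, Finset.mem_univ, true_and, Finset.notMem_empty, iff_false]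
      rintro ⟨⟨h1, _⟩, h3⟩
      have : mid = v := Fin.ext (by omega)
      exact hc (this ▸ h1)
  have hBA : (Finset.univ.filter fun v : Fin n => (f v = c ∧ ¬ v.1 < hh) ∧ ¬ v.1 = hh).card
      = (Finset.univ.filter fun v : Fin n => f v = c ∧ v.1 < hh).card := by
    refine Finset.card_bij' (fun v _ => Fin.rev v) (fun v _ => Fin.rev v) ?_ ?_ ?_ ?_
    · intro v hv
      simp only [Finset.mem_filter, Finset.mem_univ, true_and, Fin.val_rev] at hv ⊢
      refine ⟨hf v ▸ hv.1.1, ?_⟩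
      · have := v.2; omega
    · intro v hv
      simp only [Finset.mem_filter, Finset.mem_univ, true_and, Fin.val_rev] at hv ⊢
      refine ⟨⟨hf v ▸ hv.1, ?_⟩, ?_⟩ <;> · have := v.2; omega
    · intro v _; exact Fin.rev_rev v
    · intro v _; exact Fin.rev_rev v
  have hA := fib_split f hf emb hemb c
  omega

end Halving

section MainCounts
open Nat

theorem count_G {m r : ℕ} (nvec' : Fin r → ℕ) (hm : m = ∑ j, nvec' j) :
    Nat.card {g : Fin m → Fin r // ∀ j,
        (Finset.univ.filter fun u => g u = j).card = nvec' j} * ∏ j, (nvec' j)! = m ! := by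
  classical
  have hlt : ∀ u : Fin m, blkOf nvec' ↑u < r := fun u => blkOf_lt nvec' ↑u (by rw [← hm]; exact u.2)
  set B : Fin m → Fin r := fun u => ⟨blkOf nvec' ↑u, hlt u⟩ with hB
  have hBfib : ∀ j : Fin r, (Finset.univ.filter fun u => B u = j).card = nvec' j := by
    intro j
    rw [← blk_fiber_card nvec' hm j]
    congr 1
    apply Finset.filter_congr
    intro u _
    simp [hB, Fin.ext_iff]
  have hcount := card_sameFib_mul B
  rw [← Fintype.card_subtype] at hcount
  have hiff : ∀ g : Fin m → Fin r,
      (∀ j, (Finset.univ.filter fun u => g u = j).card = nvec' j) ↔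
      (∀ i, (Finset.univ.filter fun a => g a = i).card
        = (Finset.univ.filter fun a => B a = i).card) := by
    intro g
    constructor
    · intro hgi i; rw [hgi i, hBfib i]
    · intro hgi i; rw [hgi i, hBfib i]
  calc Nat.card {g : Fin m → Fin r // ∀ j,
          (Finset.univ.filter fun u => g u = j).card = nvec' j} * ∏ j, (nvec' j)!
      = Fintype.card {g : Fin m → Fin r // ∀ i,
          (Finset.univ.filter fun a => g a = i).card
            = (Finset.univ.filter fun a => B a = i).card}
          * ∏ i, ((Finset.univ.filter fun a => B a = i).card)! := by
        rw [Nat.card_congr (Equiv.subtypeEquivRight hiff), Nat.card_eq_fintype_card]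
        congr 1
        exact (Finset.prod_congr rfl (fun i _ => by rw [hBfib i])).symm
    _ = (Fintype.card (Fin m))! := by convert hcount using 3
    _ = m ! := by rw [Fintype.card_fin]

theorem count_S_even {n m r : ℕ} (nvec : Fin r → ℕ) (hne : n = 2 * m)
    (heven : ∀ j, nvec j % 2 = 0) :
    Nat.card {f : Fin n → Fin r // (∀ v, f (Fin.rev v) = f v) ∧
        ∀ j, (Finset.univ.filter fun v => f v = j).card = nvec j}
      = Nat.card {g : Fin m → Fin r // ∀ j,
          (Finset.univ.filter fun u => g u = j).card = nvec j / 2} := by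
  classical
  set emb : Fin m → Fin n := fun u => ⟨u.1, by have := u.2; omega⟩ with hemb
  have hembv : ∀ u, (emb u).1 = u.1 := fun u => rfl
  refine Nat.card_eq_of_bijective (fun f => ⟨fun u => f.1 (emb u), ?_⟩) ⟨?_, ?_⟩
  · intro j
    show (Finset.univ.filter fun u : Fin m => f.1 (emb u) = j).card = nvec j / 2
    have h2 := fib_symm_even hne f.1 f.2.1 emb hembv j
    have h3 := f.2.2 j
    omega
  · rintro ⟨f, hf⟩ ⟨f', hf'⟩ hef
    simp only [Subtype.mk.injEq] at hef ⊢
    have hef' : ∀ u : Fin m, f (emb u) = f' (emb u) := fun u => congrFun hef u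
    funext v
    by_cases hv : v.1 < m
    · have hve : v = emb ⟨v.1, hv⟩ := Fin.ext rfl
      rw [hve]; exact hef' _
    · have hrv : (Fin.rev v).1 < m := by have := v.2; rw [Fin.val_rev]; omega
      have h1 := hf.1 (Fin.rev v); rw [Fin.rev_rev] at h1
      have h1' := hf'.1 (Fin.rev v); rw [Fin.rev_rev] at h1'
      have hve : Fin.rev v = emb ⟨(Fin.rev v).1, hrv⟩ := Fin.ext rfl
      rw [h1, h1', hve]
      exact hef' _
  · rintro ⟨g, hg⟩
    set f : Fin n → Fin r := fun v =>
      if hv : v.1 < m then g ⟨v.1, hv⟩ else g ⟨n - (v.1+1), by have := v.2; omega⟩ with hfdef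
    have hfe : ∀ u : Fin m, f (emb u) = g u := by
      intro u
      simp only [hfdef]
      rw [dif_pos (show (emb u).1 < m from u.2)]
    have hsym : ∀ v, f (Fin.rev v) = f v := by
      intro v
      have hv2 := v.2
      by_cases hv : v.1 < m
      · have hr : ¬ ((Fin.rev v).1 < m) := by rw [Fin.val_rev]; omega
        simp only [hfdef]
        rw [dif_neg hr, dif_pos hv]
        exact congrArg g (Fin.ext (by simp only [Fin.val_rev]; omega))
      · have hr : (Fin.rev v).1 < m := by rw [Fin.val_rev]; omega
        simp only [hfdef]
        rw [dif_pos hr, dif_neg hv]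
        exact congrArg g (Fin.ext (by simp only [Fin.val_rev]))
    have hfib : ∀ j, (Finset.univ.filter fun v => f v = j).card = nvec j := by
      intro j
      have h2 := fib_symm_even hne f hsym emb hembv j
      have h3 : (Finset.univ.filter fun u : Fin m => f (emb u) = j)
          = (Finset.univ.filter fun u : Fin m => g u = j) := by
        apply Finset.filter_congr
        intro u _
        rw [hfe u]
      rw [h3, hg j] at h2
      have := heven j
      omega
    exact ⟨⟨f, hsym, hfib⟩, Subtype.ext (funext hfe)⟩

theorem count_S_odd {n m r : ℕ} (nvec : Fin r → ℕ) (hno : n = 2 * m + 1) (j₀ : Fin r)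
    (hodd : ∀ j, nvec j % 2 = 1 ↔ j = j₀) :
    Nat.card {f : Fin n → Fin r // (∀ v, f (Fin.rev v) = f v) ∧
        ∀ j, (Finset.univ.filter fun v => f v = j).card = nvec j}
      = Nat.card {g : Fin m → Fin r // ∀ j,
          (Finset.univ.filter fun u => g u = j).card = nvec j / 2} := by
  classical
  set emb : Fin m → Fin n := fun u => ⟨u.1, by have := u.2; omega⟩ with hemb
  have hembv : ∀ u, (emb u).1 = u.1 := fun u => rfl
  set mid : Fin n := ⟨m, by omega⟩ with hmid
  have hmval : mid.1 = m := rfl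
  have hmidval : ∀ (f : Fin n → Fin r), (∀ v, f (Fin.rev v) = f v) →
      (∀ j, (Finset.univ.filter fun v => f v = j).card = nvec j) → f mid = j₀ := by
    intro f hsym hfib
    have h2 := fib_symm_odd hno f hsym emb hembv mid hmval (f mid)
    rw [if_pos rfl] at h2
    have h3 := hfib (f mid)
    exact (hodd (f mid)).mp (by omega)
  refine Nat.card_eq_of_bijective (fun f => ⟨fun u => f.1 (emb u), ?_⟩) ⟨?_, ?_⟩
  · intro j
    show (Finset.univ.filter fun u : Fin m => f.1 (emb u) = j).card = nvec j / 2
    have h2 := fib_symm_odd hno f.1 f.2.1 emb hembv mid hmval j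
    have h3 := f.2.2 j
    split_ifs at h2 <;> omega
  · rintro ⟨f, hf⟩ ⟨f', hf'⟩ hef
    simp only [Subtype.mk.injEq] at hef ⊢
    have hef' : ∀ u : Fin m, f (emb u) = f' (emb u) := fun u => congrFun hef u
    funext v
    by_cases hv : v.1 < m
    · have hve : v = emb ⟨v.1, hv⟩ := Fin.ext rfl
      rw [hve]; exact hef' _
    · by_cases hrv : (Fin.rev v).1 < m
      · have h1 := hf.1 (Fin.rev v); rw [Fin.rev_rev] at h1
        have h1' := hf'.1 (Fin.rev v); rw [Fin.rev_rev] at h1'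
        have hve : Fin.rev v = emb ⟨(Fin.rev v).1, hrv⟩ := Fin.ext rfl
        rw [h1, h1', hve]
        exact hef' _
      · have hvm : v = mid := by
          have := v.2
          rw [Fin.val_rev] at hrv
          exact Fin.ext (by simp only [hmid]; omega)
        rw [hvm, hmidval f hf.1 hf.2, hmidval f' hf'.1 hf'.2]
  · rintro ⟨g, hg⟩
    set f : Fin n → Fin r := fun v =>
      if hv : v.1 < m then g ⟨v.1, hv⟩
      else if hv2 : m < v.1 then g ⟨n - (v.1+1), by have := v.2; omega⟩ else j₀ with hfdef
    have hfe : ∀ u : Fin m, f (emb u) = g u := by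
      intro u
      simp only [hfdef]
      rw [dif_pos (show (emb u).1 < m from u.2)]
    have hfmid : f mid = j₀ := by
      simp only [hfdef]
      rw [dif_neg (by simp [hmval]), dif_neg (by simp [hmval])]
    have hsym : ∀ v, f (Fin.rev v) = f v := by
      intro v
      have hv2 := v.2
      by_cases hv : v.1 < m
      · have hr1 : ¬ ((Fin.rev v).1 < m) := by rw [Fin.val_rev]; omega
        have hr2 : m < (Fin.rev v).1 := by rw [Fin.val_rev]; omega
        simp only [hfdef]
        rw [dif_neg hr1, dif_pos hr2, dif_pos hv]
        exact congrArg g (Fin.ext (by simp only [Fin.val_rev]; omega))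
      · by_cases hv' : m < v.1
        · have hr : (Fin.rev v).1 < m := by rw [Fin.val_rev]; omega
          simp only [hfdef]
          rw [dif_pos hr, dif_neg hv, dif_pos hv']
          exact congrArg g (Fin.ext (by simp only [Fin.val_rev]))
        · have hrr : Fin.rev v = v := Fin.ext (by rw [Fin.val_rev]; omega)
          rw [hrr]
    have hfib : ∀ j, (Finset.univ.filter fun v => f v = j).card = nvec j := by
      intro j
      have h2 := fib_symm_odd hno f hsym emb hembv mid hmval j
      have h3 : (Finset.univ.filter fun u : Fin m => f (emb u) = j)
          = (Finset.univ.filter fun u : Fin m => g u = j) := by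
        apply Finset.filter_congr
        intro u _
        rw [hfe u]
      rw [h3, hg j, hfmid] at h2
      by_cases hj : j = j₀
      · subst hj
        rw [if_pos rfl] at h2
        have := (hodd j).mpr rfl
        omega
      · rw [if_neg (fun hc => hj hc.symm)] at h2
        have : ¬ (nvec j % 2 = 1) := fun hc => hj ((hodd j).mp hc)
        omega
    exact ⟨⟨f, hsym, hfib⟩, Subtype.ext (funext hfe)⟩

end MainCounts

open Nat in
/-- The number of cosets `ωW_P` of the Young subgroup `W_P = S_{n₁} × ⋯ × S_{n_r}` in `S_n`
with `ω⁻¹ω₀ω ∈ W_P`, where `ω₀` is the order-reversing permutation. -/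
theorem card_selfdual_cosets_young {r n : ℕ} (nvec : Fin r → ℕ) (hpos : ∀ i, 0 < nvec i)
    (hn : n = ∑ i, nvec i) :
    Nat.card {q : Equiv.Perm (Fin n) ⧸ youngSubgroup n nvec |
        ∃ w : Equiv.Perm (Fin n), QuotientGroup.mk w = q ∧
          w⁻¹ * Fin.revPerm * w ∈ youngSubgroup n nvec}
      = if (Finset.univ.filter fun i => Odd (nvec i)).card ≤ 1
          then (n / 2)! / ∏ i, (nvec i / 2)! else 0 := by
  classical
  have hlt : ∀ v : Fin n, blkOf nvec ↑v < r := fun v => blkOf_lt nvec ↑v (by rw [← hn]; exact v.2)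
  set B : Fin n → Fin r := fun v => ⟨blkOf nvec ↑v, hlt v⟩ with hB
  have hWmem : ∀ w : Equiv.Perm (Fin n), w ∈ youngSubgroup n nvec ↔ ∀ v, B (w v) = B v := by
    intro w
    constructor
    · intro hw v
      exact Fin.ext (hw v)
    · intro hw v
      exact congrArg Fin.val (hw v)
  have hBfib : ∀ j : Fin r, (Finset.univ.filter fun v => B v = j).card = nvec j := by
    intro j
    rw [← blk_fiber_card nvec hn j]
    congr 1
    apply Finset.filter_congr
    intro v _
    simp [hB, Fin.ext_iff]
  -- Step A: bijection with symmetric functions with prescribed fibers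
  have stepA : Nat.card {q : Equiv.Perm (Fin n) ⧸ youngSubgroup n nvec |
        ∃ w : Equiv.Perm (Fin n), QuotientGroup.mk w = q ∧
          w⁻¹ * Fin.revPerm * w ∈ youngSubgroup n nvec}
      = Nat.card {f : Fin n → Fin r // (∀ v, f (Fin.rev v) = f v) ∧
          ∀ j, (Finset.univ.filter fun v => f v = j).card = nvec j} := by
    have hex : ∀ f : {f : Fin n → Fin r // (∀ v, f (Fin.rev v) = f v) ∧
        ∀ j, (Finset.univ.filter fun v => f v = j).card = nvec j},
        ∃ σ : Equiv.Perm (Fin n), f.1 = B ∘ σ := by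
      intro f
      apply exists_perm_of_fibcard
      intro j
      rw [f.2.2 j, hBfib j]
    choose σf hσf using hex
    refine (Nat.card_eq_of_bijective
      (fun f => (⟨QuotientGroup.mk (σf f)⁻¹, (σf f)⁻¹, rfl, ?_⟩ :
        {q : Equiv.Perm (Fin n) ⧸ youngSubgroup n nvec |
          ∃ w : Equiv.Perm (Fin n), QuotientGroup.mk w = q ∧
            w⁻¹ * Fin.revPerm * w ∈ youngSubgroup n nvec})) ⟨?_, ?_⟩).symm
    · rw [hWmem]
      intro v
      simp only [mul_inv_rev, inv_inv, Equiv.Perm.mul_apply]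
      have h1 : ∀ x, B ((σf f) x) = f.1 x := fun x => (congrFun (hσf f) x).symm
      rw [h1]
      rw [show (Fin.revPerm : Equiv.Perm (Fin n)) ((σf f)⁻¹ v) = Fin.rev ((σf f)⁻¹ v) from rfl]
      rw [f.2.1]
      conv_rhs => rw [← show (σf f) ((σf f)⁻¹ v) = v by simp, h1]
    · -- injective
      rintro f g hfg
      simp only [Subtype.mk.injEq] at hfg
      rw [QuotientGroup.eq] at hfg
      rw [hWmem] at hfg
      apply Subtype.ext
      funext x
      have h1 := hfg ((σf g) x)
      simp only [inv_inv, Equiv.Perm.mul_apply, Equiv.Perm.coe_inv, Equiv.symm_apply_apply] at h1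
      have h2 : B ((σf f) ((σf g)⁻¹ ((σf g) x))) = f.1 ((σf g)⁻¹ ((σf g) x)) :=
        (congrFun (hσf f) _).symm
      rw [Equiv.Perm.coe_inv, Equiv.symm_apply_apply] at h2
      have h3 : B ((σf g) x) = g.1 x := (congrFun (hσf g) x).symm
      rw [← h2, ← h3]
      exact h1
    · -- surjective
      rintro ⟨q, w, hwq, hwW⟩
      have hsym : ∀ v, B (w⁻¹ (Fin.rev v)) = B (w⁻¹ v) := by
        intro v
        rw [hWmem] at hwW
        have h1 := hwW (w⁻¹ v)
        simp only [Equiv.Perm.mul_apply, Equiv.Perm.coe_inv, Equiv.apply_symm_apply] at h1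
        have h2 : (Fin.revPerm : Equiv.Perm (Fin n)) v = Fin.rev v := rfl
        rwa [h2] at h1
      have hfib : ∀ j, (Finset.univ.filter fun v => B (w⁻¹ v) = j).card = nvec j := by
        intro j
        rw [fibcard_comp_perm B w⁻¹ j]
        exact hBfib j
      refine ⟨⟨fun v => B (w⁻¹ v), hsym, hfib⟩, Subtype.ext ?_⟩
      show QuotientGroup.mk (σf _)⁻¹ = q
      rw [← hwq, QuotientGroup.eq, hWmem]
      intro v
      simp only [inv_inv, Equiv.Perm.mul_apply]
      have h2 : ∀ x, B ((σf ⟨fun v => B (w⁻¹ v), hsym, hfib⟩) x) = B (w⁻¹ x) := by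
        intro x
        exact (congrFun (hσf ⟨fun v => B (w⁻¹ v), hsym, hfib⟩) x).symm
      rw [h2, Equiv.Perm.coe_inv, Equiv.symm_apply_apply]
  rw [stepA]
  clear stepA
  -- key parity identity
  have hkey : n = 2 * (∑ j, nvec j / 2) + (Finset.univ.filter fun i => Odd (nvec i)).card := by
    have h1 : ∀ j : Fin r, nvec j = 2 * (nvec j / 2) + (if Odd (nvec j) then 1 else 0) := by
      intro j
      split_ifs with h
      · have := Nat.odd_iff.mp h; omega
      · have := Nat.even_iff.mp (Nat.not_odd_iff_even.mp h); omega
    calc n = ∑ j, nvec j := hn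
      _ = ∑ j, (2 * (nvec j / 2) + if Odd (nvec j) then 1 else 0) :=
          Finset.sum_congr rfl (fun j _ => h1 j)
      _ = 2 * (∑ j, nvec j / 2) + ∑ j, (if Odd (nvec j) then 1 else 0) := by
          rw [Finset.sum_add_distrib, Finset.mul_sum]
      _ = 2 * (∑ j, nvec j / 2) + (Finset.univ.filter fun i => Odd (nvec i)).card := by
          rw [Finset.sum_boole]; simp
  by_cases hodd : (Finset.univ.filter fun i => Odd (nvec i)).card ≤ 1
  · rw [if_pos hodd]
    set m := ∑ j, nvec j / 2 with hm
    have hprodpos : 0 < ∏ i, (nvec i / 2)! := Finset.prod_pos (fun i _ => Nat.factorial_pos _)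
    rcases Nat.le_one_iff_eq_zero_or_eq_one.mp hodd with hc0 | hc1
    · -- all even
      have heven : ∀ j, nvec j % 2 = 0 := by
        intro j
        have : j ∉ Finset.univ.filter fun i => Odd (nvec i) := by
          rw [Finset.card_eq_zero.mp hc0]
          exact Finset.notMem_empty j
        simp only [Finset.mem_filter, Finset.mem_univ, true_and] at this
        have := Nat.even_iff.mp (Nat.not_odd_iff_even.mp this)
        omega
      have hne : n = 2 * m := by omega
      have hhalf : n / 2 = m := by omega
      rw [count_S_even nvec hne heven, hhalf]
      have := count_G (fun j => nvec j / 2) hm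
      exact (Nat.div_eq_of_eq_mul_left hprodpos this.symm).symm
    · -- exactly one odd
      obtain ⟨j₀, hj₀⟩ := Finset.card_eq_one.mp hc1
      have hoddiff : ∀ j, nvec j % 2 = 1 ↔ j = j₀ := by
        intro j
        rw [← Nat.odd_iff]
        constructor
        · intro h
          have : j ∈ Finset.univ.filter fun i => Odd (nvec i) := by
            simp only [Finset.mem_filter, Finset.mem_univ, true_and]; exact h
          rw [hj₀, Finset.mem_singleton] at this
          exact this
        · intro h
          subst h
          have : j ∈ Finset.univ.filter fun i => Odd (nvec i) := by
            rw [hj₀]; exact Finset.mem_singleton_self j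
          simp only [Finset.mem_filter, Finset.mem_univ, true_and] at this
          exact this
      have hno : n = 2 * m + 1 := by omega
      have hhalf : n / 2 = m := by omega
      rw [count_S_odd nvec hno j₀ hoddiff, hhalf]
      have := count_G (fun j => nvec j / 2) hm
      exact (Nat.div_eq_of_eq_mul_left hprodpos this.symm).symm
  · rw [if_neg hodd]
    have h2le : 2 ≤ (Finset.univ.filter fun i => Odd (nvec i)).card := by omega
    obtain ⟨j₁, hj₁, j₂, hj₂, hjne⟩ := Finset.one_lt_card.mp h2le
    simp only [Finset.mem_filter, Finset.mem_univ, true_and] at hj₁ hj₂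
    have hempty : IsEmpty {f : Fin n → Fin r // (∀ v, f (Fin.rev v) = f v) ∧
        ∀ j, (Finset.univ.filter fun v => f v = j).card = nvec j} := by
      constructor
      rintro ⟨f, hsym, hfib⟩
      rcases Nat.even_or_odd n with hev | hod
      · have hne : n = 2 * (n / 2) := by
          have := Nat.even_iff.mp hev; omega
        set emb : Fin (n / 2) → Fin n := fun u => ⟨u.1, by have := u.2; omega⟩ with hemb
        have h2 := fib_symm_even hne f hsym emb (fun u => rfl) j₁
        rw [hfib j₁] at h2
        have := Nat.odd_iff.mp hj₁
        omega
      · have hno : n = 2 * (n / 2) + 1 := by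
          have := Nat.odd_iff.mp hod; omega
        set emb : Fin (n / 2) → Fin n := fun u => ⟨u.1, by have := u.2; omega⟩ with hemb
        set mid : Fin n := ⟨n / 2, by omega⟩ with hmid
        have h2 := fib_symm_odd hno f hsym emb (fun u => rfl) mid rfl j₁
        have h3 := fib_symm_odd hno f hsym emb (fun u => rfl) mid rfl j₂
        rw [hfib j₁] at h2
        rw [hfib j₂] at h3
        have ho1 := Nat.odd_iff.mp hj₁
        have ho2 := Nat.odd_iff.mp hj₂
        have hf1 : f mid = j₁ := by
          by_contra hc
          rw [if_neg hc] at h2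
          omega
        have hf2 : f mid = j₂ := by
          by_contra hc
          rw [if_neg hc] at h3
          omega
        exact hjne (hf1 ▸ hf2 ▸ rfl)
    simp [Nat.card_of_isEmpty]
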